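/- arXiv:2411.08475 — 2 statements merged into one kernel-verified Lean document; each statement's English description precedes it below -/
import Mathlib

section
/- Let H be an edge-colored complete graph containing no rainbow K_{1,k+1}, and let G' be a rainbow subgraph of H with maximum degree at most k. If u and v are two vertices of degree exactly k in G' and uv ∉ E(G'), then adding the edge uv to G' creates a rainbow star K_{1,k+1} centered at u or at v; consequently, in any such maximal configuration the vertices of degree k in G' form a clique. -/
open SimpleGraph

/-- Number of edges of a graph. -/
noncomputable def edgeCount {V : Type*} (G : SimpleGraph V) : ℕ := G.edgeSet.ncard

/-- Degree of a vertex. -/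
noncomputable def deg {V : Type*} (G : SimpleGraph V) (v : V) : ℕ := (G.neighborSet v).ncard

/-- Maximum degree. -/
noncomputable def maxDeg {V : Type*} (G : SimpleGraph V) : ℕ := sSup (Set.range (deg G))

/-- Matching number: maximum size of a matching. -/
noncomputable def matchNum {V : Type*} (G : SimpleGraph V) : ℕ :=
  sSup {n | ∃ M : G.Subgraph, M.IsMatching ∧ M.edgeSet.ncard = n}

/-- `G` contains a copy of `H` (a subgraph isomorphic to `H`). -/
def CopyIn {α β : Type*} (H : SimpleGraph α) (G : SimpleGraph β) : Prop :=
  ∃ f : H →g G, Function.Injective f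

/-- The friendship graph `F_k`: `k` triangles sharing exactly one common vertex (vertex 0). -/
def friendship (k : ℕ) : SimpleGraph (Fin (2 * k + 1)) :=
  SimpleGraph.fromRel (fun a b => a.val = 0 ∨ b.val = 0 ∨ (a.val + 1) / 2 = (b.val + 1) / 2)

/-- The star `K_{1,m}` with center 0 and `m` leaves. -/
def starGraph (m : ℕ) : SimpleGraph (Fin (m + 1)) :=
  SimpleGraph.fromRel (fun a b => a.val = 0 ∨ b.val = 0)

/-- The matching `mK_2` of `m` disjoint edges. -/
def matchGraph (m : ℕ) : SimpleGraph (Fin (2 * m)) :=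
  SimpleGraph.fromRel (fun a b => a.val / 2 = b.val / 2)

/-- Turán number: max edges of an `n`-vertex graph with no copy of `H`. -/
noncomputable def exNum (n : ℕ) {α : Type*} (H : SimpleGraph α) : ℕ :=
  sSup {m | ∃ G : SimpleGraph (Fin n), ¬ CopyIn H G ∧ edgeCount G = m}

/-- `f(ν, Δ)`: max edges of a graph with matching number ≤ ν and max degree ≤ Δ. -/
noncomputable def fMax (ν Δ : ℕ) : ℕ :=
  sSup {m | ∃ (n : ℕ) (G : SimpleGraph (Fin n)),
    matchNum G ≤ ν ∧ (∀ v, deg G v ≤ Δ) ∧ edgeCount G = m}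

/-- A surjective edge-coloring of `K_n` using exactly `r` colors `0, …, r-1`. -/
def IsSurjColoring (n r : ℕ) (c : Sym2 (Fin n) → ℕ) : Prop :=
  (∀ e : Sym2 (Fin n), ¬ e.IsDiag → c e < r) ∧
  ∀ i < r, ∃ e : Sym2 (Fin n), ¬ e.IsDiag ∧ c e = i

/-- The colored `K_n` contains a rainbow copy of `H`. -/
def RainbowCopy {α : Type*} {n : ℕ} (c : Sym2 (Fin n) → ℕ) (H : SimpleGraph α) : Prop :=
  ∃ f : H →g (⊤ : SimpleGraph (Fin n)), Function.Injective f ∧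
    Set.InjOn (fun e => c (Sym2.map (⇑f) e)) H.edgeSet

/-- Anti-Ramsey number for the pair `{K_{1,k+1}, (k+1)K_2}`. -/
noncomputable def arPair (n k : ℕ) : ℕ :=
  sInf {r | ∀ c : Sym2 (Fin n) → ℕ, IsSurjColoring n r c →
    RainbowCopy c (_root_.starGraph (k + 1)) ∨ RainbowCopy c (matchGraph (k + 1))}

/-- Anti-Ramsey number of the friendship graph `F_k`. -/
noncomputable def arFriend (n k : ℕ) : ℕ :=
  sInf {r | ∀ c : Sym2 (Fin n) → ℕ, IsSurjColoring n r c → RainbowCopy c (friendship k)}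

/-- Anti-Ramsey number of a general graph `G`. -/
noncomputable def arGraph (n : ℕ) {α : Type*} (G : SimpleGraph α) : ℕ :=
  sInf {r | ∀ c : Sym2 (Fin n) → ℕ, IsSurjColoring n r c → RainbowCopy c G}

/-- Turán number of the family `{G − e : e ∈ E(G)}`. -/
noncomputable def exFamDel (n : ℕ) {α : Type*} (G : SimpleGraph α) : ℕ :=
  sSup {m | ∃ H : SimpleGraph (Fin n),
    (∀ e ∈ G.edgeSet, ¬ CopyIn (G.deleteEdges {e}) H) ∧ edgeCount H = m}

lemma star_edge {m : ℕ} {e : Sym2 (Fin (m + 1))} (he : e ∈ (_root_.starGraph m).edgeSet) :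
    ∃ i : Fin (m + 1), i ≠ 0 ∧ e = s(0, i) := by
  induction e with
  | h a b =>
    rw [SimpleGraph.mem_edgeSet] at he
    obtain ⟨hab, hrel⟩ := he
    have h0 : a = 0 ∨ b = 0 := by
      rcases hrel with (h | h) | (h | h)
      · exact Or.inl (Fin.ext (by simpa using h))
      · exact Or.inr (Fin.ext (by simpa using h))
      · exact Or.inr (Fin.ext (by simpa using h))
      · exact Or.inl (Fin.ext (by simpa using h))
    rcases h0 with h | h
    · exact ⟨b, fun hb => hab (by rw [h, hb]), by rw [h]⟩
    · exact ⟨a, fun ha => hab (by rw [h, ha]), by rw [h, Sym2.eq_swap]⟩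

lemma rainbowStarOf {n k : ℕ} (c : Sym2 (Fin n) → ℕ) (w : Fin n) (g : Fin (k + 2) → Fin n)
    (hg : Function.Injective g) (h0 : g 0 = w)
    (hcol : ∀ i j : Fin (k + 2), i ≠ 0 → j ≠ 0 → i ≠ j → c s(w, g i) ≠ c s(w, g j)) :
    RainbowCopy c (_root_.starGraph (k + 1)) := by
  refine ⟨⟨g, ?_⟩, hg, ?_⟩
  · intro a b hab
    exact hg.ne hab.1
  · intro e1 he1 e2 he2 heq
    obtain ⟨i, hi, rfl⟩ := star_edge he1
    obtain ⟨j, hj, rfl⟩ := star_edge he2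
    have heq' : c s(w, g i) = c s(w, g j) := by rw [← h0]; exact heq
    have : i = j := by
      by_contra hij
      exact hcol i j hi hj hij heq' 
    rw [this]

lemma build_rainbow {n k : ℕ} (c : Sym2 (Fin n) → ℕ) (G' : SimpleGraph (Fin n))
    (hrb : Set.InjOn c G'.edgeSet) (w z : Fin n)
    (hw : deg G' w = k) (hwz : ¬ G'.Adj w z) (hne : w ≠ z)
    (hc : ∀ e ∈ G'.edgeSet, w ∈ e → c e ≠ c s(w, z)) :
    RainbowCopy c (_root_.starGraph (k + 1)) := by
  classical
  have hfin : (G'.neighborSet w).Finite := Set.toFinite _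
  have hw' : hfin.toFinset.card = k := by
    rw [← Set.ncard_eq_toFinset_card _ hfin]; exact hw
  let E := hfin.toFinset.equivFinOfCardEq hw'
  set nb : Fin k → Fin n := fun i => ((E.symm i : hfin.toFinset) : Fin n) with hnb
  have nbadj : ∀ i, G'.Adj w (nb i) := fun i => by
    have := (E.symm i).2
    rwa [Set.Finite.mem_toFinset, SimpleGraph.mem_neighborSet] at this
  have nbinj : Function.Injective nb :=
    Subtype.coe_injective.comp E.symm.injective
  have nbne_w : ∀ i, nb i ≠ w := fun i => (nbadj i).ne'
  have nbne_z : ∀ i, nb i ≠ z := by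
    intro i h
    exact hwz (h ▸ nbadj i)
  set g : Fin (k + 2) → Fin n := fun i =>
    if h : (i : ℕ) = 0 then w else
    if h2 : (i : ℕ) ≤ k then nb ⟨(i : ℕ) - 1, by omega⟩ else z with hgdef
  have hg0 : g 0 = w := by simp [hgdef]
  have hgval : ∀ i : Fin (k + 2), i ≠ 0 →
      (∃ a : Fin k, g i = nb a ∧ (i : ℕ) = (a : ℕ) + 1) ∨ (g i = z ∧ (i : ℕ) = k + 1) := by
    intro i hi
    have hi' : (i : ℕ) ≠ 0 := fun h => hi (Fin.ext h)
    by_cases h2 : (i : ℕ) ≤ k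
    · exact Or.inl ⟨⟨(i : ℕ) - 1, by omega⟩, by simp [hgdef, hi', hi, h2],
        by simp only [Fin.val_mk]; omega⟩
    · have : (i : ℕ) = k + 1 := by have := i.isLt; omega
      exact Or.inr ⟨by simp [hgdef, hi', hi, h2], this⟩
  have hginj : Function.Injective g := by
    intro a b hab
    by_cases ha : a = 0 <;> by_cases hb : b = 0
    · rw [ha, hb]
    · rcases hgval b hb with ⟨x, hx, _⟩ | ⟨hx, _⟩
      · rw [ha, hg0, hx] at hab; exact absurd hab.symm (nbne_w x)
      · rw [ha, hg0, hx] at hab; exact absurd hab hne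
    · rcases hgval a ha with ⟨x, hx, _⟩ | ⟨hx, _⟩
      · rw [hb, hg0, hx] at hab; exact absurd hab (nbne_w x)
      · rw [hb, hg0, hx] at hab; exact absurd hab.symm hne
    · rcases hgval a ha with ⟨x, hx, hxv⟩ | ⟨hx, hxv⟩ <;>
        rcases hgval b hb with ⟨y, hy, hyv⟩ | ⟨hy, hyv⟩
      · rw [hx, hy] at hab
        have : x = y := nbinj hab
        exact Fin.ext (by omega)
      · rw [hx, hy] at hab; exact absurd hab (nbne_z x)
      · rw [hx, hy] at hab; exact absurd hab.symm (nbne_z y)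
      · exact Fin.ext (by omega)
  refine rainbowStarOf c w g hginj hg0 ?_
  intro i j hi hj hij heq
  have hmemnb : ∀ x : Fin k, s(w, nb x) ∈ G'.edgeSet := fun x => (nbadj x)
  rcases hgval i hi with ⟨x, hx, hxv⟩ | ⟨hx, hxv⟩ <;>
    rcases hgval j hj with ⟨y, hy, hyv⟩ | ⟨hy, hyv⟩
  · rw [hx, hy] at heq
    have := hrb (hmemnb x) (hmemnb y) heq
    rw [Sym2.congr_right] at this
    exact hij (Fin.ext (by have : x = y := nbinj this; omega))
  · rw [hx, hy] at heq
    exact hc _ (hmemnb x) (Sym2.mem_mk_left _ _) heq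
  · rw [hx, hy] at heq
    exact hc _ (hmemnb y) (Sym2.mem_mk_left _ _) heq.symm
  · exact hij (Fin.ext (by omega))

/-- Claim 8: if `G'` is a rainbow subgraph of the colored `K_n` with `Δ(G') ≤ k` and
`u, v` are nonadjacent vertices of degree `k`, then adding `uv` creates a rainbow
`K_{1,k+1}` centered at `u` or at `v`; consequently, if the coloring has no rainbow
`K_{1,k+1}`, the degree-`k` vertices of `G'` form a clique. -/
theorem stmt17 (n k : ℕ) (c : Sym2 (Fin n) → ℕ) (G' : SimpleGraph (Fin n))
    (hrb : Set.InjOn c G'.edgeSet) (hdeg : ∀ x, deg G' x ≤ k)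
    (u v : Fin n) (hu : deg G' u = k) (hv : deg G' v = k) (huv : u ≠ v) :
    (¬ G'.Adj u v →
      ((∀ e ∈ G'.edgeSet, u ∈ e → c e ≠ c s(u, v)) ∨
       (∀ e ∈ G'.edgeSet, v ∈ e → c e ≠ c s(u, v)))) ∧
    (¬ RainbowCopy c (_root_.starGraph (k + 1)) → G'.Adj u v) := by
  classical
  have part1 : ¬ G'.Adj u v →
      ((∀ e ∈ G'.edgeSet, u ∈ e → c e ≠ c s(u, v)) ∨
       (∀ e ∈ G'.edgeSet, v ∈ e → c e ≠ c s(u, v))) := by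
    intro hnadj
    by_contra hcon
    push_neg at hcon
    obtain ⟨⟨e1, he1, hu1, hc1⟩, ⟨e2, he2, hv2, hc2⟩⟩ := hcon
    have heq : e1 = e2 := hrb he1 he2 (hc1.trans hc2.symm)
    have : e1 = s(u, v) := by
      rw [← Sym2.mem_and_mem_iff huv]
      exact ⟨hu1, heq ▸ hv2⟩
    rw [this] at he1
    exact hnadj he1
  refine ⟨part1, ?_⟩
  intro hno
  by_contra hnadj
  rcases part1 hnadj with h | h
  · exact hno (build_rainbow c G' hrb u v hu hnadj huv h)
  · refine hno (build_rainbow c G' hrb v u hv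
      (fun ha => hnadj ha.symm) huv.symm ?_)
    intro e he hve
    rw [show s(v, u) = s(u, v) from Sym2.eq_swap]
    exact h e he hve
end

section
/- For any graph H with Gallai–Edmonds decomposition (D, A, C): if every component of H[D] is factor-critical with orders c₁,…,c_t, H[C] has a perfect matching, and every maximum matching matches A into distinct components of D, then ν(H) = |A| + |C|/2 + Σᵢ (cᵢ − 1)/2. -/
open SimpleGraph

section Helpers

variable {V : Type*} [Fintype V] {G : SimpleGraph V}

lemma matching_verts_ncard {M : G.Subgraph} (hM : M.IsMatching) :
    M.verts.ncard = 2 * M.edgeSet.ncard := by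
  classical
  rw [Subgraph.isMatching_iff_forall_degree] at hM
  have key : M.verts.toFinset.card = 2 * M.coe.edgeFinset.card := by
    rw [← M.coe.sum_degrees_eq_twice_card_edges]
    convert_to _ = Finset.sum Finset.univ fun v => SimpleGraph.degree (Subgraph.coe M) v using 3
    have hirr : ∀ (x : V) (i1 i2 : Fintype (M.neighborSet x)),
        @SimpleGraph.Subgraph.degree V G M x i1 = @SimpleGraph.Subgraph.degree V G M x i2 := by
      intro x i1 i2; rw [Subsingleton.elim i1 i2]
    have hM' : ∀ x : M.verts, M.degree (↑x) = 1 := fun x => (hirr _ _ _).trans (hM x x.2)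
    simp [hM', Finset.card_univ, Fintype.card_subtype]
  have h3 : M.coe.edgeFinset.card = M.edgeSet.ncard := by
    rw [← M.image_coe_edgeSet_coe,
      Set.ncard_image_of_injective _ (Sym2.map.injective Subtype.val_injective),
      Set.ncard_eq_toFinset_card']
    unfold SimpleGraph.edgeFinset
    exact congrArg Finset.card (Set.toFinset_congr rfl)
  rw [Set.ncard_eq_toFinset_card', key, h3]

lemma matchNum_bddAbove :
    BddAbove {n | ∃ M : G.Subgraph, M.IsMatching ∧ M.edgeSet.ncard = n} := by
  refine ⟨Nat.card (Sym2 V), ?_⟩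
  rintro n ⟨M, -, rfl⟩
  rw [← Set.ncard_univ]
  exact Set.ncard_le_ncard (Set.subset_univ _) Set.finite_univ

lemma exists_matchNum (G : SimpleGraph V) :
    ∃ M : G.Subgraph, M.IsMatching ∧ M.edgeSet.ncard = matchNum G := by
  have h0 : (0:ℕ) ∈ {n | ∃ M : G.Subgraph, M.IsMatching ∧ M.edgeSet.ncard = n} := by
    refine ⟨⊥, ?_, by simp⟩
    intro v hv
    simp [Subgraph.verts_bot] at hv
  exact Nat.sSup_mem ⟨0, h0⟩ matchNum_bddAbove

lemma le_matchNum {M : G.Subgraph} (hM : M.IsMatching) : M.edgeSet.ncard ≤ matchNum G :=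
  le_csSup matchNum_bddAbove ⟨M, hM, rfl⟩

end Helpers

/-- The matching-number formula of the Gallai–Edmonds Structure Theorem:
`ν(H) = |A| + |C|/2 + Σᵢ (cᵢ - 1)/2`, the last sum written as `(|D| - t)/2` where `t`
is the number of components of `H[D]` (all of odd order, being factor-critical). -/



theorem stmt18 {V : Type*} [Fintype V] (H : SimpleGraph V) :
    let D : Set V := {v | ∃ M : H.Subgraph, M.IsMatching ∧
      M.edgeSet.ncard = matchNum H ∧ v ∉ M.verts}
    let A : Set V := {v | v ∉ D ∧ ∃ u ∈ D, H.Adj v u}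
    let C : Set V := (Set.univ \ D) \ A
    (∀ K : (H.induce D).ConnectedComponent, ∀ v : D, v ∈ K.supp →
      ∃ M : (H.induce D).Subgraph, M.IsMatching ∧ M.verts = K.supp \ {v}) →
    (∃ M : (H.induce C).Subgraph, M.IsPerfectMatching) →
    (∀ M : H.Subgraph, M.IsMatching → M.edgeSet.ncard = matchNum H →
      (∀ a ∈ A, ∃ b ∈ D, M.Adj a b) ∧
      (∀ a ∈ A, ∀ a' ∈ A, a ≠ a' → ∀ b b' (hb : b ∈ D) (hb' : b' ∈ D),
        M.Adj a b → M.Adj a' b' →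
        ¬ (H.induce D).Reachable ⟨b, hb⟩ ⟨b', hb'⟩)) →
    matchNum H = A.ncard + C.ncard / 2 +
      (D.ncard - Nat.card ((H.induce D).ConnectedComponent)) / 2 := by
  intro D A C h1 h2 h3
  classical
  -- basic set facts
  have hAD : ∀ x ∈ A, x ∉ D := fun x hx => hx.1
  have hCD : ∀ x ∈ C, x ∉ D := fun x hx => hx.1.2
  have hCA : ∀ x ∈ C, x ∉ A := fun x hx => hx.2
  have hcover : ∀ x : V, x ∈ D ∨ x ∈ A ∨ x ∈ C := by
    intro x
    by_cases hd : x ∈ D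
    · exact Or.inl hd
    by_cases ha : x ∈ A
    · exact Or.inr (Or.inl ha)
    · exact Or.inr (Or.inr ⟨⟨trivial, hd⟩, ha⟩)
  have hCDadj : ∀ x ∈ C, ∀ d ∈ D, ¬ H.Adj x d := by
    intro x hx d hd hadj
    exact hCA x hx ⟨hCD x hx, d, hd, hadj⟩
  -- representatives of components
  have hrep : ∀ K : (H.induce D).ConnectedComponent, ∃ u : ↥D, u ∈ K.supp := by
    intro K
    obtain ⟨u, hu⟩ := K.exists_rep
    exact ⟨u, hu⟩
  -- every component has odd order
  have hodd : ∀ K : (H.induce D).ConnectedComponent, Odd K.supp.ncard := by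
    intro K
    obtain ⟨u, hu⟩ := hrep K
    obtain ⟨M0, hM0, hv0⟩ := h1 K u hu
    have he : (K.supp \ {u}).ncard = 2 * M0.edgeSet.ncard := by
      rw [← hv0]; exact matching_verts_ncard hM0
    have hd1 := Set.ncard_diff_singleton_add_one hu (Set.toFinite _)
    exact ⟨M0.edgeSet.ncard, by omega⟩
  -- a maximum matching
  obtain ⟨Mm, hMm, hMmc⟩ := exists_matchNum H
  obtain ⟨hA3, hA3'⟩ := h3 Mm hMm hMmc
  -- chosen partners of A-vertices
  have hsel : ∀ a : ↥A, ∃ x, x ∈ D ∧ Mm.Adj ↑a x := by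
    intro a; obtain ⟨x, hx, hadj⟩ := hA3 a a.2; exact ⟨x, hx, hadj⟩
  choose b hbD hbAdj using hsel
  have hKainj : ∀ a a' : ↥A,
      (H.induce D).connectedComponentMk ⟨b a, hbD a⟩ =
        (H.induce D).connectedComponentMk ⟨b a', hbD a'⟩ → a = a' := by
    intro a a' h
    by_contra hne
    have hval : (a : V) ≠ (a' : V) := fun hv => hne (Subtype.ext hv)
    exact hA3' a a.2 a' a'.2 hval (b a) (b a') (hbD a) (hbD a') (hbAdj a) (hbAdj a')
      (ConnectedComponent.exact h)
  have hbinj : ∀ a a' : ↥A, b a = b a' → a = a' := by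
    intro a a' h
    exact hKainj a a' (congrArg _ (Subtype.ext h))
  -- choice of one vertex in each component, compatible with the partners
  have hvKex : ∃ vK : (H.induce D).ConnectedComponent → ↥D,
      (∀ K, vK K ∈ K.supp) ∧
      (∀ a : ↥A, vK ((H.induce D).connectedComponentMk ⟨b a, hbD a⟩) = ⟨b a, hbD a⟩) := by
    refine ⟨fun K => if h : ∃ a : ↥A, (H.induce D).connectedComponentMk ⟨b a, hbD a⟩ = K
      then ⟨b h.choose, hbD h.choose⟩ else (hrep K).choose, ?_, ?_⟩
    · intro K
      by_cases h : ∃ a : ↥A, (H.induce D).connectedComponentMk ⟨b a, hbD a⟩ = K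
      · simp only [dif_pos h]
        exact h.choose_spec
      · simp only [dif_neg h]
        exact (hrep K).choose_spec
    · intro a
      have h : ∃ a' : ↥A, (H.induce D).connectedComponentMk ⟨b a', hbD a'⟩ =
          (H.induce D).connectedComponentMk ⟨b a, hbD a⟩ := ⟨a, rfl⟩
      simp only [dif_pos h]
      have := hKainj _ _ h.choose_spec
      rw [this]
  obtain ⟨vK, hvmem, hvKa⟩ := hvKex
  have hvinj : Function.Injective vK := by
    intro K K' h
    by_contra hne
    exact Set.disjoint_left.mp (pairwise_disjoint_supp_connectedComponent _ hne)
      (hvmem K) (h ▸ hvmem K')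
  -- cardinality inequalities
  have hta : A.ncard ≤ Nat.card ((H.induce D).ConnectedComponent) := by
    have h := Nat.card_le_card_of_injective
      (fun a : ↥A => (H.induce D).connectedComponentMk ⟨b a, hbD a⟩)
      (fun a a' h => hKainj a a' h)
    rwa [Nat.card_coe_set_eq] at h
  have htd : Nat.card ((H.induce D).ConnectedComponent) ≤ D.ncard := by
    have h := Nat.card_le_card_of_injective vK hvinj
    rwa [Nat.card_coe_set_eq] at h
  -- the perfect matching of C, lifted to H
  obtain ⟨MC0, hMC0⟩ := h2
  have hncEven : Even C.ncard := by
    have h : Nat.card ↥C = 2 * MC0.edgeSet.ncard := by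
      rw [← Set.ncard_univ, ← hMC0.2.verts_eq_univ]
      exact matching_verts_ncard hMC0.1
    rw [← Nat.card_coe_set_eq]
    exact ⟨MC0.edgeSet.ncard, by omega⟩
  have hMCex : ∃ MC : H.Subgraph, MC.IsMatching ∧ MC.verts = C := by
    refine ⟨MC0.map ⟨Subtype.val, fun {x y} h => h⟩,
      hMC0.1.map _ Subtype.val_injective, ?_⟩
    rw [Subgraph.map_verts, hMC0.2.verts_eq_univ]
    show Subtype.val '' Set.univ = C
    rw [Set.image_univ]
    exact Subtype.range_coe
  obtain ⟨MC, hMCm, hMCverts⟩ := hMCex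
  -- near-perfect matchings of the components, lifted to H
  have hNex : ∀ K : (H.induce D).ConnectedComponent, ∃ Nk : H.Subgraph, Nk.IsMatching ∧
      Nk.verts = Subtype.val '' (K.supp \ {vK K}) := by
    intro K
    obtain ⟨M0, hm0, hv0⟩ := h1 K (vK K) (hvmem K)
    refine ⟨M0.map ⟨Subtype.val, fun {x y} h => h⟩,
      hm0.map _ Subtype.val_injective, ?_⟩
    rw [Subgraph.map_verts, hv0]
    rfl
  choose N hNm hNv using hNex
  -- the edges from A to D
  have hEex : ∀ a : ↥A, ∃ E : H.Subgraph, E.IsMatching ∧ E.verts = {(a : V), b a} := by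
    intro a
    exact ⟨H.subgraphOfAdj (Mm.adj_sub (hbAdj a)),
      Subgraph.IsMatching.subgraphOfAdj _, rfl⟩
  choose Ea hEam hEav using hEex
  -- disjointness of the E pieces
  have hEdisj : Pairwise fun a a' => Disjoint (Ea a).support (Ea a').support := by
    intro a a' hne
    rw [(hEam a).support_eq_verts, (hEam a').support_eq_verts, hEav, hEav,
      Set.disjoint_left]
    intro x hx hx'
    simp only [Set.mem_insert_iff, Set.mem_singleton_iff] at hx hx'
    have h1v : (a : V) ≠ a' := fun h => hne (Subtype.ext h)
    have hbne : b a ≠ b a' := fun h => hne (hbinj a a' h)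
    rcases hx with rfl | rfl <;> rcases hx' with h | h
    · exact h1v h
    · exact hAD _ a.2 (by rw [h]; exact hbD a')
    · exact hAD _ a'.2 (by rw [← h]; exact hbD a)
    · exact hbne h
  -- disjointness of the N pieces
  have hNdisj : Pairwise fun K K' => Disjoint (N K).support (N K').support := by
    intro K K' hne
    rw [(hNm K).support_eq_verts, (hNm K').support_eq_verts, hNv, hNv, Set.disjoint_left]
    rintro x ⟨u, hu, rfl⟩ ⟨u', hu', huu⟩
    have : u = u' := Subtype.ext (by exact huu.symm)
    exact Set.disjoint_left.mp (pairwise_disjoint_supp_connectedComponent _ hne)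
      hu.1 (this ▸ hu'.1)
  -- the combined matching
  have hM'ex : ∃ M' : H.Subgraph, M'.IsMatching ∧ C ⊆ M'.verts ∧
      (∀ a : ↥A, (a : V) ∈ M'.verts ∧ b a ∈ M'.verts) ∧
      (∀ u : ↥D, u ∉ Set.range vK → (u : V) ∈ M'.verts) := by
    have hMEm : (⨆ a, Ea a).IsMatching := Subgraph.IsMatching.iSup hEam hEdisj
    have hMNm : (⨆ K, N K).IsMatching := Subgraph.IsMatching.iSup hNm hNdisj
    have hMEverts : (⨆ a, Ea a).verts = ⋃ a, (Ea a).verts := Subgraph.verts_iSup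
    have hMNverts : (⨆ K, N K).verts = ⋃ K, (N K).verts := Subgraph.verts_iSup
    have hMEMN : Disjoint (⨆ a, Ea a).support (⨆ K, N K).support := by
      rw [hMEm.support_eq_verts, hMNm.support_eq_verts, hMEverts, hMNverts,
        Set.disjoint_left]
      intro x hx hx'
      obtain ⟨a, ha⟩ := Set.mem_iUnion.mp hx
      obtain ⟨K, hK⟩ := Set.mem_iUnion.mp hx'
      rw [hEav] at ha
      rw [hNv] at hK
      obtain ⟨u, hu, rfl⟩ := hK
      rcases ha with h | h
      · exact hAD _ a.2 (h ▸ u.2)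
      · have hu' : u = ⟨b a, hbD a⟩ := Subtype.ext (by simpa using h)
        have hKK : (H.induce D).connectedComponentMk ⟨b a, hbD a⟩ = K := by
          rw [← hu']; exact hu.1
        have : vK K = u := by rw [← hKK, hvKa a, hu']
        exact hu.2 (by rw [this]; exact rfl)
    have hrestm : ((⨆ a, Ea a) ⊔ (⨆ K, N K)).IsMatching := hMEm.sup hMNm hMEMN
    have hCrest : Disjoint MC.support ((⨆ a, Ea a) ⊔ (⨆ K, N K)).support := by
      rw [hMCm.support_eq_verts, hrestm.support_eq_verts, hMCverts, Subgraph.verts_sup,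
        hMEverts, hMNverts, Set.disjoint_left]
      intro x hx hx'
      rcases hx' with hx' | hx'
      · obtain ⟨a, ha⟩ := Set.mem_iUnion.mp hx'
        rw [hEav] at ha
        rcases ha with h | h
        · exact hCA _ hx (h ▸ a.2)
        · exact hCD _ hx (h ▸ hbD a)
      · obtain ⟨K, hK⟩ := Set.mem_iUnion.mp hx'
        rw [hNv] at hK
        obtain ⟨u, hu, rfl⟩ := hK
        exact hCD _ hx u.2
    refine ⟨MC ⊔ ((⨆ a, Ea a) ⊔ (⨆ K, N K)), hMCm.sup hrestm hCrest, ?_, ?_, ?_⟩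
    · intro x hx
      rw [Subgraph.verts_sup, hMCverts]
      exact Or.inl hx
    · intro a
      constructor
      · rw [Subgraph.verts_sup]
        refine Or.inr ?_
        rw [Subgraph.verts_sup, hMEverts]
        refine Or.inl (Set.mem_iUnion.mpr ⟨a, ?_⟩)
        rw [hEav]; exact Or.inl rfl
      · rw [Subgraph.verts_sup]
        refine Or.inr ?_
        rw [Subgraph.verts_sup, hMEverts]
        refine Or.inl (Set.mem_iUnion.mpr ⟨a, ?_⟩)
        rw [hEav]; exact Or.inr rfl
    · intro u hu
      rw [Subgraph.verts_sup]
      refine Or.inr ?_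
      rw [Subgraph.verts_sup, hMNverts]
      refine Or.inr (Set.mem_iUnion.mpr ⟨(H.induce D).connectedComponentMk u, ?_⟩)
      rw [hNv]
      exact ⟨u, ⟨rfl, fun h => hu ⟨_, (Set.mem_singleton_iff.mp h).symm⟩⟩, rfl⟩
  -- lower bound
  have hlow : 2 * A.ncard + C.ncard +
      (D.ncard - Nat.card ((H.induce D).ConnectedComponent)) ≤ 2 * matchNum H := by
    obtain ⟨M', hM'm, hC', hA', hD'⟩ := hM'ex
    have hM'card : M'.verts.ncard = 2 * M'.edgeSet.ncard := matching_verts_ncard hM'm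
    have hle : M'.edgeSet.ncard ≤ matchNum H := le_matchNum hM'm
    set B : Set V := Set.range (fun a : ↥A => b a) with hBdef
    set W : Set V := Subtype.val '' (Set.univ \ Set.range vK) with hWdef
    have hsub : C ∪ (A ∪ (B ∪ W)) ⊆ M'.verts := by
      intro x hx
      rcases hx with hx | hx | hx | hx
      · exact hC' hx
      · exact (hA' ⟨x, hx⟩).1
      · obtain ⟨a, rfl⟩ := hx
        exact (hA' a).2
      · obtain ⟨u, hu, rfl⟩ := hx
        exact hD' u (fun h => hu.2 h)
    have hBcard : B.ncard = A.ncard := by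
      rw [hBdef, ← Nat.card_coe_set_eq,
        Nat.card_range_of_injective (f := fun a : ↥A => b a) (fun a a' h => hbinj a a' h),
        Nat.card_coe_set_eq]
    have hWcard : W.ncard = D.ncard - Nat.card ((H.induce D).ConnectedComponent) := by
      have e1 : (Set.range vK).ncard = Nat.card ((H.induce D).ConnectedComponent) := by
        rw [← Nat.card_coe_set_eq]; exact Nat.card_range_of_injective hvinj
      have e2 : Nat.card ↥D = D.ncard := Nat.card_coe_set_eq D
      rw [hWdef, Set.ncard_image_of_injective _ Subtype.val_injective,
        Set.ncard_diff (Set.subset_univ _) (Set.toFinite _), Set.ncard_univ, e1, e2]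
    have hBD : B ⊆ D := by rintro x ⟨a, rfl⟩; exact hbD a
    have hWD : W ⊆ D := by rintro x ⟨u, hu, rfl⟩; exact u.2
    have hdBW : Disjoint B W := by
      rw [Set.disjoint_left]
      rintro x ⟨a, rfl⟩ ⟨u, hu, huv⟩
      have : u = ⟨b a, hbD a⟩ := Subtype.ext (by simpa using huv)
      exact hu.2 ⟨(H.induce D).connectedComponentMk ⟨b a, hbD a⟩, by rw [hvKa a, this]⟩
    have hdABW : Disjoint A (B ∪ W) := by
      rw [Set.disjoint_left]
      intro x hx hx'
      rcases hx' with hx' | hx'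
      · exact hAD x hx (hBD hx')
      · exact hAD x hx (hWD hx')
    have hdC : Disjoint C (A ∪ (B ∪ W)) := by
      rw [Set.disjoint_left]
      intro x hx hx'
      rcases hx' with hx' | hx' | hx'
      · exact hCA x hx hx'
      · exact hCD x hx (hBD hx')
      · exact hCD x hx (hWD hx')
    have hcard : (C ∪ (A ∪ (B ∪ W))).ncard =
        C.ncard + (A.ncard + (B.ncard + W.ncard)) := by
      rw [Set.ncard_union_eq hdC (Set.toFinite _) (Set.toFinite _),
        Set.ncard_union_eq hdABW (Set.toFinite _) (Set.toFinite _),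
        Set.ncard_union_eq hdBW (Set.toFinite _) (Set.toFinite _)]
    have hfin := Set.ncard_le_ncard hsub (Set.toFinite _)
    rw [hcard, hBcard, hWcard] at hfin
    omega
  -- upper bound: components not hit by an A-edge have an unmatched vertex
  have hmiss : ∀ K : (H.induce D).ConnectedComponent,
      (K ∉ Set.range (fun a : ↥A => (H.induce D).connectedComponentMk ⟨b a, hbD a⟩)) →
      ∃ u : ↥D, u ∈ K.supp ∧ (u : V) ∉ Mm.verts := by
    intro K hK
    set S : Set ↥D := {u | u ∈ K.supp ∧ (u : V) ∈ Mm.verts} with hSdef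
    have hMind : (Mm.induce (Subtype.val '' S)).IsMatching := by
      intro x hx
      rw [Subgraph.induce_verts] at hx
      obtain ⟨u, huS, rfl⟩ := hx
      obtain ⟨w, hw, hwuniq⟩ := hMm huS.2
      have hwv : w ∈ Mm.verts := Mm.edge_vert hw.symm
      have hwD : w ∈ D := by
        rcases hcover w with h | h | h
        · exact h
        · exfalso
          obtain ⟨y, hy, hyuniq⟩ := hMm hwv
          have hby : b ⟨w, h⟩ = y := hyuniq _ (hbAdj ⟨w, h⟩)
          have huy : (u : V) = y := hyuniq _ hw.symm
          have hbu : (⟨b ⟨w, h⟩, hbD ⟨w, h⟩⟩ : ↥D) = u := by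
            apply Subtype.ext
            show b ⟨w, h⟩ = ↑u
            rw [hby, huy]
          refine hK ⟨⟨w, h⟩, ?_⟩
          show (H.induce D).connectedComponentMk ⟨b ⟨w, h⟩, hbD ⟨w, h⟩⟩ = K
          rw [hbu]
          exact huS.1
        · exact absurd (Mm.adj_sub hw).symm (hCDadj w h (u : V) u.2)
      have hwK : (⟨w, hwD⟩ : ↥D) ∈ K.supp := by
        have hadj : (H.induce D).Adj ⟨w, hwD⟩ u := by exact (Mm.adj_sub hw).symm
        rw [ConnectedComponent.mem_supp_iff,
          ConnectedComponent.connectedComponentMk_eq_of_adj hadj]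
        exact huS.1
      have hwS : w ∈ Subtype.val '' S := ⟨⟨w, hwD⟩, ⟨hwK, hwv⟩, rfl⟩
      refine ⟨w, ?_, ?_⟩
      · exact ⟨⟨u, huS, rfl⟩, hwS, hw⟩
      · intro y hy
        exact hwuniq y hy.2.2
    have heven : Even S.ncard := by
      have h := matching_verts_ncard hMind
      rw [Subgraph.induce_verts, Set.ncard_image_of_injective _ Subtype.val_injective] at h
      exact ⟨(Mm.induce (Subtype.val '' S)).edgeSet.ncard, by omega⟩
    have hSsub : S ⊆ K.supp := fun u hu => hu.1
    have hSne : S ≠ K.supp := by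
      intro h
      obtain ⟨m, hm⟩ := heven
      obtain ⟨m', hm'⟩ := hodd K
      rw [h] at hm
      omega
    obtain ⟨u, hu1, hu2⟩ := Set.exists_of_ssubset (hSsub.ssubset_of_ne hSne)
    exact ⟨u, hu1, fun hv => hu2 ⟨hu1, hv⟩⟩
  -- upper bound
  have hup : 2 * matchNum H +
      (Nat.card ((H.induce D).ConnectedComponent) - A.ncard) ≤
      A.ncard + C.ncard + D.ncard := by
    have hMmverts : Mm.verts.ncard = 2 * matchNum H := by
      rw [matching_verts_ncard hMm, hMmc]
    set R : Set ((H.induce D).ConnectedComponent) :=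
      Set.range (fun a : ↥A => (H.induce D).connectedComponentMk ⟨b a, hbD a⟩) with hRdef
    have hg : ∀ K : ↥(Rᶜ), ∃ u : ↥D, u ∈ (K : (H.induce D).ConnectedComponent).supp ∧
        (u : V) ∉ Mm.verts := fun K => hmiss K K.2
    choose g hg1 hg2 using hg
    have hginj : Function.Injective g := by
      intro K K' h
      by_contra hne
      have hne' : (K : (H.induce D).ConnectedComponent) ≠ K' :=
        fun hh => hne (Subtype.ext hh)
      exact Set.disjoint_left.mp (pairwise_disjoint_supp_connectedComponent _ hne')
        (hg1 K) (h ▸ hg1 K')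
    have hRcard : R.ncard = A.ncard := by
      rw [hRdef, ← Nat.card_coe_set_eq,
        Nat.card_range_of_injective
          (f := fun a : ↥A => (H.induce D).connectedComponentMk ⟨b a, hbD a⟩)
          (fun a a' h => hKainj a a' h),
        Nat.card_coe_set_eq]
    have hWcsub : Subtype.val '' (Set.range g) ⊆ (Mm.verts)ᶜ := by
      rintro x ⟨u, ⟨K, rfl⟩, rfl⟩
      exact hg2 K
    have hWccard : (Subtype.val '' (Set.range g)).ncard =
        Nat.card ((H.induce D).ConnectedComponent) - A.ncard := by
      rw [Set.ncard_image_of_injective _ Subtype.val_injective,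
        ← Nat.card_coe_set_eq, Nat.card_range_of_injective hginj]
      have h1 : Nat.card ↥(Rᶜ) = (Rᶜ).ncard := Nat.card_coe_set_eq _
      have h2 := Set.ncard_add_ncard_compl R (Set.toFinite _) (Set.toFinite _)
      rw [h1, ← hRcard]
      omega
    have hcompl := Set.ncard_add_ncard_compl Mm.verts (Set.toFinite _) (Set.toFinite _)
    have hcomplge : Nat.card ((H.induce D).ConnectedComponent) - A.ncard ≤
        (Mm.verts)ᶜ.ncard := by
      rw [← hWccard]
      exact Set.ncard_le_ncard hWcsub (Set.toFinite _)
    have huniv : Nat.card V = A.ncard + C.ncard + D.ncard := by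
      have he : (Set.univ : Set V) = (A ∪ C) ∪ D := by
        apply Set.eq_of_subset_of_subset
        · intro x _
          rcases hcover x with h | h | h
          · exact Or.inr h
          · exact Or.inl (Or.inl h)
          · exact Or.inl (Or.inr h)
        · exact Set.subset_univ _
      have hdAC : Disjoint A C := by
        rw [Set.disjoint_left]; exact fun x hx hx' => hCA x hx' hx
      have hdACD : Disjoint (A ∪ C) D := by
        rw [Set.disjoint_left]
        intro x hx hx'
        rcases hx with hx | hx
        · exact hAD x hx hx'
        · exact hCD x hx hx'
      rw [← Set.ncard_univ, he,
        Set.ncard_union_eq hdACD (Set.toFinite _) (Set.toFinite _),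
        Set.ncard_union_eq hdAC (Set.toFinite _) (Set.toFinite _)]
    omega
  -- assemble
  obtain ⟨c2, hc2⟩ := hncEven
  omega
end
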